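/- Having an agreement embedding is a transitive relation: if G has an agreement embedding into H and H has an agreement embedding into N, then G has an agreement embedding into N. -/

import Mathlib

open Relation

/-- An undirected multigraph with finitely many vertices and edges, whose
vertices may carry labels (natural numbers, standing for the taxa in `X`).
Each edge `e` has two (possibly equal) endpoints `fst e` and `snd e`. -/
structure Multigraph : Type 1 where
  V : Type
  E : Type
  finV : Finite V
  finE : Finite E
  fst : E → V
  snd : E → V
  label : V → Option ℕ

attribute [instance] Multigraph.finV Multigraph.finE

namespace Multigraph

variable (G : Multigraph)

/-- The degree of a vertex (loops count twice). -/
noncomputable def degree (v : G.V) : ℕ :=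
  {e : G.E | G.fst e = v}.ncard + {e : G.E | G.snd e = v}.ncard

/-- A sprout: an unlabelled degree-one vertex. -/
def IsSprout (v : G.V) : Prop := G.label v = none ∧ G.degree v = 1

/-- A labelled isolated vertex (labelled singleton). -/
def IsLabelledIsolated (v : G.V) : Prop := (G.label v).isSome ∧ G.degree v = 0

def Adj (u v : G.V) : Prop :=
  ∃ e, (G.fst e = u ∧ G.snd e = v) ∨ (G.fst e = v ∧ G.snd e = u)

/-- Reachability by walks. -/
def Reach : G.V → G.V → Prop := ReflTransGen G.Adj

def Connected : Prop := Nonempty G.V ∧ ∀ u v, G.Reach u v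

/-- Delete a set of edges (keeping all vertices). -/
def deleteEdges (F : Set G.E) : Multigraph where
  V := G.V
  E := {e : G.E // e ∉ F}
  finV := G.finV
  finE := Subtype.finite
  fst := fun e => G.fst e.1
  snd := fun e => G.snd e.1
  label := G.label

/-- A cut-edge: deleting it disconnects two previously connected vertices. -/
def IsCutEdge (e : G.E) : Prop :=
  ∃ u v, G.Reach u v ∧ ¬ (G.deleteEdges {e}).Reach u v

/-- The reticulation number (cyclomatic number) of a graph, `|E| - (|V| - 1)`. -/
noncomputable def tier : ℕ := Nat.card G.E - (Nat.card G.V - 1)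

/-- Deleting the edge set `F` yields a spanning tree: the remaining graph is
connected and acyclic (every remaining edge is a cut-edge). -/
def YieldsSpanningTree (F : Set G.E) : Prop :=
  (G.deleteEdges F).Connected ∧ ∀ e, (G.deleteEdges F).IsCutEdge e

/-! ### Walks -/

/-- A dart: an edge together with a direction. -/
abbrev Dart := G.E × Bool

def dartSrc (d : G.Dart) : G.V := if d.2 then G.fst d.1 else G.snd d.1

def dartTgt (d : G.Dart) : G.V := if d.2 then G.snd d.1 else G.fst d.1

/-- `IsWalk u v l`: the list of darts `l` forms a walk from `u` to `v`. -/
def IsWalk : G.V → G.V → List G.Dart → Prop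
  | u, v, [] => u = v
  | u, v, d :: ds => G.dartSrc d = u ∧ IsWalk (G.dartTgt d) v ds

/-- The internal vertices of a walk. -/
def interiorVerts (l : List G.Dart) : List G.V :=
  (l.map G.dartTgt).dropLast

end Multigraph
namespace Multigraph

/-! ### Embeddings -/

/-- An embedding of a (possibly disconnected) graph `G` into `N`: every vertex of
`G` is mapped to a vertex of `N` and every edge of `G` is mapped to a nonempty
trail of `N` between the images of its endpoints; distinct edges of `G` use
pairwise disjoint sets of edges of `N` (so the components of `G` are mapped to
subdivisions lying in pairwise edge-disjoint subgraphs of `N`), and labels are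
preserved. -/
structure Emb (G N : Multigraph) where
  vMap : G.V → N.V
  path : G.E → List N.Dart
  walk_ok : ∀ e, N.IsWalk (vMap (G.fst e)) (vMap (G.snd e)) (path e)
  path_ne : ∀ e, path e ≠ []
  nodup : ∀ e, (path e).Nodup
  edge_inj : ∀ e e' : G.E, ∀ d ∈ path e, ∀ d' ∈ path e', d.1 = d'.1 → e = e' ∧ d = d'
  interior_nodup : ∀ e, (N.interiorVerts (path e)).Nodup
  interior_disj : ∀ e e', e ≠ e' → ∀ w ∈ N.interiorVerts (path e), w ∉ N.interiorVerts (path e')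
  label_ok : ∀ v i, G.label v = some i → N.label (vMap v) = some i

/-- A plain embedding, witnessing that `N` displays `G`: additionally the vertex
map is injective and the subdivision vertices (interior vertices of the paths)
are fresh. -/
structure PlainEmb (G N : Multigraph) extends Emb G N where
  vMap_inj : Function.Injective vMap
  interior_fresh : ∀ e, ∀ w ∈ N.interiorVerts (path e), ∀ v, vMap v ≠ w

/-- `N` displays `G`: a subdivision of `G` is a subgraph of `N`. -/
def Displays (N G : Multigraph) : Prop := Nonempty (PlainEmb G N)

/-- An agreement embedding of `G` into `N`: an embedding such that
(i) all edges of `N` are covered,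
(ii) at most two vertices of `G` are mapped to the same vertex of `N`, and if two
distinct vertices share an image, one of them is a sprout and the other a
labelled isolated vertex,
(iii) every labelled vertex of `N` is the image of exactly one vertex of `G`,
which carries the same label, and
(iv) only sprouts may be mapped onto interior (subdivision) vertices of paths. -/
structure AgrEmb (G N : Multigraph) extends Emb G N where
  covers : ∀ f : N.E, ∃ e, ∃ d ∈ path e, d.1 = f
  two_to_one : ∀ u v, u ≠ v → vMap u = vMap v →
    (G.IsSprout u ∧ G.IsLabelledIsolated v) ∨ (G.IsSprout v ∧ G.IsLabelledIsolated u)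
  at_most_two : ∀ u v w, u ≠ v → v ≠ w → u ≠ w →
    ¬ (vMap u = vMap v ∧ vMap v = vMap w)
  labels_unique : ∀ x : N.V, ∀ i, N.label x = some i →
    ∃! v : G.V, G.label v = some i ∧ vMap v = x
  interior_fresh : ∀ e, ∀ w ∈ N.interiorVerts (path e), ∀ v, ¬ G.IsSprout v → vMap v ≠ w

/-! ### Isomorphisms -/

/-- A label-preserving isomorphism of multigraphs. -/
structure Iso (G H : Multigraph) where
  vEquiv : G.V ≃ H.V
  eEquiv : G.E ≃ H.E
  ends_ok : ∀ e,
    (H.fst (eEquiv e) = vEquiv (G.fst e) ∧ H.snd (eEquiv e) = vEquiv (G.snd e)) ∨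
    (H.fst (eEquiv e) = vEquiv (G.snd e) ∧ H.snd (eEquiv e) = vEquiv (G.fst e))
  label_ok : ∀ v, H.label (vEquiv v) = G.label v

/-! ### Components -/

variable (G : Multigraph)

/-- The connected components of `G`. -/
def Comp : Type := Quot G.Adj

/-- The component of a vertex. -/
def comp (v : G.V) : G.Comp := Quot.mk _ v

def CompHasSprout (c : G.Comp) : Prop := ∃ v, G.comp v = c ∧ G.IsSprout v

/-- The number of components that contain no sprout (agreement subgraphs). -/
noncomputable def agreementCompCount : ℕ := {c : G.Comp | ¬ G.CompHasSprout c}.ncard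

/-- A disagreement edge: a single edge both of whose endpoints are sprouts
(hence its component consists of this edge alone, on two unlabelled vertices). -/
def IsDisEdge (e : G.E) : Prop := G.IsSprout (G.fst e) ∧ G.IsSprout (G.snd e)

noncomputable def disEdgeCount : ℕ := {e : G.E | G.IsDisEdge e}.ncard

noncomputable def sproutCount : ℕ := {v : G.V | G.IsSprout v}.ncard

def IsSproutFree : Prop := ∀ v, ¬ G.IsSprout v

/-- The subgraph of a component `c` of `G`. -/
def compSubgraph (c : G.Comp) : Multigraph where
  V := {v : G.V // G.comp v = c}
  E := {e : G.E // G.comp (G.fst e) = c}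
  finV := Subtype.finite
  finE := Subtype.finite
  fst := fun e => ⟨G.fst e.1, e.2⟩
  snd := fun e => ⟨G.snd e.1, by
    have : G.comp (G.fst e.1) = G.comp (G.snd e.1) := Quot.sound ⟨e.1, Or.inl ⟨rfl, rfl⟩⟩
    rw [← this]; exact e.2⟩
  label := fun v => G.label v.1

/-- A (connected multigraph that is a) tree: connected and every edge is a cut-edge. -/
def IsTreeGraph : Prop := G.Connected ∧ ∀ e, G.IsCutEdge e

/-- Delete a set of disagreement edges together with their endpoints. -/
def deleteDisEdges (A : Set G.E) : Multigraph where
  V := {v : G.V // ∀ e ∈ A, G.fst e ≠ v ∧ G.snd e ≠ v}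
  E := {e : G.E // e ∉ A ∧ ∀ e' ∈ A,
    (G.fst e' ≠ G.fst e ∧ G.snd e' ≠ G.fst e) ∧ (G.fst e' ≠ G.snd e ∧ G.snd e' ≠ G.snd e)}
  finV := Subtype.finite
  finE := Subtype.finite
  fst := fun e => ⟨G.fst e.1, fun e' he' => (e.2.2 e' he').1⟩
  snd := fun e => ⟨G.snd e.1, fun e' he' => (e.2.2 e' he').2⟩
  label := fun v => G.label v.1


/-! ### Auxiliary lemmas for transitivity of agreement embeddings -/

section Aux

variable {G : Multigraph}

/-- Flip the direction of a dart. -/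
def flipDart (G : Multigraph) (d : G.Dart) : G.Dart := (d.1, !d.2)

@[simp] lemma dartSrc_flip (d : G.Dart) : G.dartSrc (G.flipDart d) = G.dartTgt d := by
  cases d with | mk f b => cases b <;> simp [flipDart, dartSrc, dartTgt]

@[simp] lemma dartTgt_flip (d : G.Dart) : G.dartTgt (G.flipDart d) = G.dartSrc d := by
  cases d with | mk f b => cases b <;> simp [flipDart, dartSrc, dartTgt]

@[simp] lemma flip_flip (d : G.Dart) : G.flipDart (G.flipDart d) = d := by
  cases d with | mk f b => cases b <;> simp [flipDart]

lemma isWalk_append {u v w : G.V} {l l' : List G.Dart}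
    (h : G.IsWalk u v l) (h' : G.IsWalk v w l') : G.IsWalk u w (l ++ l') := by
  induction l generalizing u with
  | nil => simpa [IsWalk] using h ▸ h'
  | cons d ds ih =>
    obtain ⟨h1, h2⟩ := h
    exact ⟨h1, ih h2⟩

lemma isWalk_reverse {u v : G.V} {l : List G.Dart} (h : G.IsWalk u v l) :
    G.IsWalk v u ((l.map (G.flipDart)).reverse) := by
  induction l generalizing u with
  | nil => simpa [IsWalk] using h.symm
  | cons d ds ih =>
    obtain ⟨h1, h2⟩ := h
    have := isWalk_append (ih h2) (show G.IsWalk (G.dartTgt d) u [G.flipDart d] by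
      constructor
      · simp
      · simpa [IsWalk] using h1)
    simpa using this

lemma walk_getLast_tgt {u v : G.V} {l : List G.Dart} (h : G.IsWalk u v l) (hne : l ≠ []) :
    G.dartTgt (l.getLast hne) = v := by
  induction l generalizing u with
  | nil => simp at hne
  | cons d ds ih =>
    obtain ⟨h1, h2⟩ := h
    cases ds with
    | nil => simpa [IsWalk] using h2
    | cons d' ds' => simpa [List.getLast] using ih h2 (by simp)

lemma walk_head_src {u v : G.V} {d : G.Dart} {ds : List G.Dart}
    (h : G.IsWalk u v (d :: ds)) : G.dartSrc d = u := h.1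

@[simp] lemma interiorVerts_nil : G.interiorVerts [] = [] := rfl

lemma interiorVerts_single (d : G.Dart) : G.interiorVerts [d] = [] := rfl

lemma interiorVerts_cons {d : G.Dart} {ds : List G.Dart} (h : ds ≠ []) :
    G.interiorVerts (d :: ds) = G.dartTgt d :: G.interiorVerts ds := by
  unfold interiorVerts
  rw [List.map_cons, List.dropLast_cons_of_ne_nil (by simpa using h)]

lemma interiorVerts_append {l l' : List G.Dart} (h : l' ≠ []) :
    G.interiorVerts (l ++ l') = l.map G.dartTgt ++ G.interiorVerts l' := by
  unfold interiorVerts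
  rw [List.map_append, List.dropLast_append_of_ne_nil (by simpa using h)]

/-- The list of targets of a nonempty walk is its interior vertices followed by
the endpoint. -/
lemma map_tgt_eq_interior_concat {u v : G.V} {l : List G.Dart} (h : G.IsWalk u v l)
    (hne : l ≠ []) : l.map G.dartTgt = G.interiorVerts l ++ [v] := by
  have h1 : (l.map G.dartTgt) ≠ [] := by simpa using hne
  have h2 := walk_getLast_tgt h hne
  have h3 : (l.map G.dartTgt).getLast h1 = v := by
    rw [List.getLast_map]; exact h2
  conv_lhs => rw [← List.dropLast_append_getLast h1]
  rw [h3]; rfl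

/-- The sources of the darts of a walk. -/
lemma map_src_eq {u v : G.V} {l : List G.Dart} (h : G.IsWalk u v l) :
    l.map G.dartSrc = (u :: l.map G.dartTgt).dropLast := by
  induction l generalizing u with
  | nil => simp
  | cons d ds ih =>
    obtain ⟨h1, h2⟩ := h
    rw [List.map_cons, h1, ih h2, List.map_cons]
    exact (List.dropLast_cons_of_ne_nil (by simp)).symm

lemma dropLast_reverse' {α : Type*} (l : List α) : l.reverse.dropLast = l.tail.reverse := by
  induction l with
  | nil => simp
  | cons a l ih => simp [List.reverse_cons, List.dropLast_append_of_ne_nil]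

lemma interiorVerts_reverse_flip {u v : G.V} {l : List G.Dart} (h : G.IsWalk u v l) :
    G.interiorVerts ((l.map G.flipDart).reverse) = (G.interiorVerts l).reverse := by
  unfold interiorVerts
  rw [List.map_reverse, List.map_map]
  have hc : (G.dartTgt ∘ G.flipDart) = G.dartSrc := by funext d; simp
  rw [hc, dropLast_reverse']
  congr 1
  rw [map_src_eq h]
  cases l with
  | nil => simp
  | cons d ds =>
    rw [List.dropLast_cons_of_ne_nil (by simp)]
    rfl

end Aux

section Aux2

variable {G : Multigraph}

/-- Any vertex incident to a dart of a walk is an endpoint or interior vertex. -/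
lemma walk_vert_cases {u v s : G.V} {l : List G.Dart} (h : G.IsWalk u v l)
    {x : G.Dart} (hx : x ∈ l) (hs : G.dartSrc x = s ∨ G.dartTgt x = s) :
    s = u ∨ s = v ∨ s ∈ G.interiorVerts l := by
  induction l generalizing u with
  | nil => simp at hx
  | cons d ds ih =>
    obtain ⟨h1, h2⟩ := h
    rcases List.mem_cons.mp hx with rfl | hx'
    · rcases hs with hs | hs
      · exact Or.inl (hs.symm.trans h1)
      · cases ds with
        | nil => exact Or.inr (Or.inl (hs.symm.trans h2))
        | cons d' ds' =>
          refine Or.inr (Or.inr ?_)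
          rw [interiorVerts_cons (by simp)]
          exact List.mem_cons.mpr (Or.inl hs.symm)
    · rcases ih h2 hx' with h3 | h3 | h3
      · cases ds with
        | nil => simp at hx'
        | cons d' ds' =>
          refine Or.inr (Or.inr ?_)
          rw [interiorVerts_cons (by simp)]
          exact List.mem_cons.mpr (Or.inl h3)
      · exact Or.inr (Or.inl h3)
      · cases ds with
        | nil => simp at h3
        | cons d' ds' =>
          refine Or.inr (Or.inr ?_)
          rw [interiorVerts_cons (by simp)]
          exact List.mem_cons.mpr (Or.inr h3)

/-- At an interior vertex of a walk, some dart arrives and some (other) dart leaves. -/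
lemma walk_interior_darts {u v s : G.V} {l : List G.Dart} (h : G.IsWalk u v l)
    (hnd : l.Nodup) (hs : s ∈ G.interiorVerts l) :
    ∃ d ∈ l, ∃ d' ∈ l, d ≠ d' ∧ G.dartTgt d = s ∧ G.dartSrc d' = s := by
  induction l generalizing u with
  | nil => simp at hs
  | cons d ds ih =>
    obtain ⟨h1, h2⟩ := h
    cases ds with
    | nil => simp [interiorVerts_single] at hs
    | cons d2 ds' =>
      rw [interiorVerts_cons (by simp)] at hs
      rcases List.mem_cons.mp hs with rfl | hs'
      · refine ⟨d, by simp, d2, by simp, ?_, rfl, h2.1⟩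
        intro hdd
        exact (List.nodup_cons.mp hnd).1 (hdd ▸ List.mem_cons_self)
      · obtain ⟨a, ha, b, hb, hab, hta, htb⟩ := ih h2 (List.nodup_cons.mp hnd).2 hs'
        exact ⟨a, List.mem_cons_of_mem _ ha, b, List.mem_cons_of_mem _ hb, hab, hta, htb⟩

/-- An edge incident to `u` makes the degree of `u` positive. -/
lemma degree_pos_of_incident {u : G.V} {f : G.E} (h : G.fst f = u ∨ G.snd f = u) :
    G.degree u ≠ 0 := by
  unfold degree
  rcases h with h | h
  · have : ({e : G.E | G.fst e = u}).Nonempty := ⟨f, h⟩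
    have := Set.ncard_pos (s := {e : G.E | G.fst e = u}) (Set.toFinite _) |>.mpr this
    omega
  · have : ({e : G.E | G.snd e = u}).Nonempty := ⟨f, h⟩
    have := Set.ncard_pos (s := {e : G.E | G.snd e = u}) (Set.toFinite _) |>.mpr this
    omega

lemma exists_incident_of_degree_ne_zero {u : G.V} (h : G.degree u ≠ 0) :
    ∃ f, G.fst f = u ∨ G.snd f = u := by
  unfold degree at h
  by_contra hc
  push_neg at hc
  have h1 : {e : G.E | G.fst e = u} = ∅ := by
    ext e; simp [(hc e).1]
  have h2 : {e : G.E | G.snd e = u} = ∅ := by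
    ext e; simp [(hc e).2]
  rw [h1, h2] at h
  simp at h

/-- Two distinct edges incident to `u` make the degree at least `2`. -/
lemma two_le_degree {u : G.V} {f1 f2 : G.E} (hne : f1 ≠ f2)
    (h1 : G.fst f1 = u ∨ G.snd f1 = u) (h2 : G.fst f2 = u ∨ G.snd f2 = u) :
    2 ≤ G.degree u := by
  unfold degree
  have hA : ∀ g1 g2 : G.E, g1 ≠ g2 → G.fst g1 = u → G.fst g2 = u →
      2 ≤ {e : G.E | G.fst e = u}.ncard := by
    intro g1 g2 hg hg1 hg2
    have : ({g1, g2} : Set G.E) ⊆ {e : G.E | G.fst e = u} := by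
      intro x hx; rcases hx with rfl | rfl; exacts [hg1, hg2]
    calc 2 = ({g1, g2} : Set G.E).ncard := (Set.ncard_pair hg).symm
    _ ≤ _ := Set.ncard_le_ncard this (Set.toFinite _)
  have hB : ∀ g1 g2 : G.E, g1 ≠ g2 → G.snd g1 = u → G.snd g2 = u →
      2 ≤ {e : G.E | G.snd e = u}.ncard := by
    intro g1 g2 hg hg1 hg2
    have : ({g1, g2} : Set G.E) ⊆ {e : G.E | G.snd e = u} := by
      intro x hx; rcases hx with rfl | rfl; exacts [hg1, hg2]
    calc 2 = ({g1, g2} : Set G.E).ncard := (Set.ncard_pair hg).symm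
    _ ≤ _ := Set.ncard_le_ncard this (Set.toFinite _)
  have hposA : ∀ g : G.E, G.fst g = u → 1 ≤ {e : G.E | G.fst e = u}.ncard := fun g hg =>
    Set.ncard_pos (Set.toFinite _) |>.mpr ⟨g, hg⟩
  have hposB : ∀ g : G.E, G.snd g = u → 1 ≤ {e : G.E | G.snd e = u}.ncard := fun g hg =>
    Set.ncard_pos (Set.toFinite _) |>.mpr ⟨g, hg⟩
  rcases h1 with h1 | h1 <;> rcases h2 with h2 | h2
  · have := hA f1 f2 hne h1 h2; omega
  · have := hposA f1 h1; have := hposB f2 h2; omega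
  · have := hposB f1 h1; have := hposA f2 h2; omega
  · have := hB f1 f2 hne h1 h2; omega

/-- A loop at `u` makes the degree at least `2`. -/
lemma two_le_degree_loop {u : G.V} {f : G.E} (h1 : G.fst f = u) (h2 : G.snd f = u) :
    2 ≤ G.degree u := by
  unfold degree
  have hposA : 1 ≤ {e : G.E | G.fst e = u}.ncard :=
    Set.ncard_pos (Set.toFinite _) |>.mpr ⟨f, h1⟩
  have hposB : 1 ≤ {e : G.E | G.snd e = u}.ncard :=
    Set.ncard_pos (Set.toFinite _) |>.mpr ⟨f, h2⟩
  omega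

/-- A dart incident to `s` gives an edge incident to `s`. -/
lemma dart_incident {s : G.V} {x : G.Dart} (h : G.dartSrc x = s ∨ G.dartTgt x = s) :
    G.fst x.1 = s ∨ G.snd x.1 = s := by
  cases x with | mk f b =>
  cases b <;> simp only [dartSrc, dartTgt] at h <;> tauto

end Aux2

section Aux3a

variable {G H : Multigraph}

/-- Distinct darts on the path of a single edge have distinct underlying edges. -/
lemma Emb.edge_ne (φ : Emb G H) {e : G.E} {d d' : H.Dart}
    (hd : d ∈ φ.path e) (hd' : d' ∈ φ.path e) (hne : d ≠ d') : d.1 ≠ d'.1 := fun h =>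
  hne (φ.edge_inj e e d hd d' hd' h).2

lemma Emb.head_src (φ : Emb G H) (e : G.E) :
    H.dartSrc ((φ.path e).head (φ.path_ne e)) = φ.vMap (G.fst e) := by
  have hw := φ.walk_ok e
  obtain ⟨d, ds, hcons⟩ := List.exists_cons_of_ne_nil (φ.path_ne e)
  have hh : (φ.path e).head (φ.path_ne e) = d := by simp [hcons]
  rw [hcons] at hw
  rw [hh]
  exact hw.1

lemma Emb.getLast_tgt (φ : Emb G H) (e : G.E) :
    H.dartTgt ((φ.path e).getLast (φ.path_ne e)) = φ.vMap (G.snd e) :=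
  walk_getLast_tgt (φ.walk_ok e) _

lemma head_ne_getLast_of_nodup {α : Type*} {l : List α} (h : l.Nodup) (hne : l ≠ [])
    (hlen : 2 ≤ l.length) : l.head hne ≠ l.getLast hne := by
  cases l with
  | nil => simp at hne
  | cons d ds =>
    cases ds with
    | nil => simp at hlen
    | cons d' ds' =>
      have hmem : (d :: d' :: ds').getLast (by simp) ∈ d' :: ds' := by
        rw [List.getLast_cons (by simp)]
        exact List.getLast_mem _
      intro hq
      simp only [List.head_cons] at hq
      refine (List.nodup_cons.mp h).1 ?_
      rw [hq]
      exact hmem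

/-- Images of vertices of degree at least two have degree at least two. -/
lemma Emb.two_le_degree_image (φ : Emb G H) {u : G.V} (h : 2 ≤ G.degree u) :
    2 ≤ H.degree (φ.vMap u) := by
  classical
  unfold degree at h
  set A := {e : G.E | G.fst e = u} with hA
  set B := {e : G.E | G.snd e = u} with hB
  -- incidences at the image from first/last darts
  have hfirst : ∀ e ∈ A, H.fst ((φ.path e).head (φ.path_ne e)).1 = φ.vMap u ∨
      H.snd ((φ.path e).head (φ.path_ne e)).1 = φ.vMap u := by
    intro e he
    exact dart_incident (Or.inl (by rw [φ.head_src e, he]))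
  have hlast : ∀ e ∈ B, H.fst ((φ.path e).getLast (φ.path_ne e)).1 = φ.vMap u ∨
      H.snd ((φ.path e).getLast (φ.path_ne e)).1 = φ.vMap u := by
    intro e he
    exact dart_incident (Or.inr (by rw [φ.getLast_tgt e, he]))
  rcases Nat.lt_or_ge A.ncard 2 with hA2 | hA2
  rotate_left
  · -- two distinct edges with `fst = u`
    obtain ⟨e₁, e₂, he₁, he₂, hne⟩ :=
      (Set.one_lt_ncard_iff (s := A) (Set.toFinite _)).mp (by omega)
    refine two_le_degree ?_ (hfirst e₁ he₁) (hfirst e₂ he₂)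
    intro hq
    exact hne (φ.edge_inj e₁ e₂ _ (List.head_mem _) _ (List.head_mem _) hq).1
  rcases Nat.lt_or_ge B.ncard 2 with hB2 | hB2
  rotate_left
  · obtain ⟨e₁, e₂, he₁, he₂, hne⟩ :=
      (Set.one_lt_ncard_iff (s := B) (Set.toFinite _)).mp (by omega)
    refine two_le_degree ?_ (hlast e₁ he₁) (hlast e₂ he₂)
    intro hq
    exact hne (φ.edge_inj e₁ e₂ _ (List.getLast_mem _) _ (List.getLast_mem _) hq).1
  -- mixed case: one incidence of each kind
  have hA1 : 1 ≤ A.ncard := by omega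
  have hB1 : 1 ≤ B.ncard := by omega
  obtain ⟨e₁, he₁⟩ := (Set.ncard_pos (Set.toFinite _)).mp hA1
  obtain ⟨e₂, he₂⟩ := (Set.ncard_pos (Set.toFinite _)).mp hB1
  by_cases hee : e₁ = e₂
  · subst hee
    -- `e₁` is a loop at `u`
    rcases Nat.lt_or_ge (φ.path e₁).length 2 with hlen | hlen
    · -- single dart, a loop at the image
      obtain ⟨x, hx⟩ : ∃ x, φ.path e₁ = [x] := by
        have := φ.path_ne e₁
        cases hp : φ.path e₁ with
        | nil => exact absurd hp this
        | cons y ys =>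
          cases ys with
          | nil => exact ⟨y, rfl⟩
          | cons z zs => rw [hp] at hlen; exact absurd hlen (by simp)
      have hw := φ.walk_ok e₁
      rw [hx] at hw
      obtain ⟨hw1, hw2⟩ := hw
      have hsrc : H.dartSrc x = φ.vMap u := by rw [hw1, he₁]
      have htgt : H.dartTgt x = φ.vMap u := by
        have : H.dartTgt x = φ.vMap (G.snd e₁) := hw2
        rw [this, he₂]
      cases x with | mk f b =>
      cases b <;> simp [dartSrc, dartTgt] at hsrc htgt <;>
        exact two_le_degree_loop (by assumption) (by assumption)
    · -- at least two darts: first and last darts have distinct edges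
      have hne : (φ.path e₁).head (φ.path_ne e₁) ≠ (φ.path e₁).getLast (φ.path_ne e₁) :=
        head_ne_getLast_of_nodup (φ.nodup e₁) _ hlen
      refine two_le_degree ?_ (hfirst e₁ he₁) (hlast e₁ he₂)
      exact φ.edge_ne (List.head_mem _) (List.getLast_mem _) hne
  · refine two_le_degree ?_ (hfirst e₁ he₁) (hlast e₂ he₂)
    intro hq
    exact hee (φ.edge_inj e₁ e₂ _ (List.head_mem _) _ (List.getLast_mem _) hq).1

end Aux3a

section Aux3

variable {G H : Multigraph}


/-- Interior vertices of embedded paths are not sprouts. -/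
lemma Emb.interior_not_sprout (φ : Emb G H) {e : G.E} {s : H.V}
    (hs : s ∈ H.interiorVerts (φ.path e)) : ¬ H.IsSprout s := by
  obtain ⟨d, hd, d', hd', hne, ht, hsrc⟩ :=
    walk_interior_darts (φ.walk_ok e) (φ.nodup e) hs
  have hfe : d.1 ≠ d'.1 := φ.edge_ne hd hd' hne
  have h1 := dart_incident (G := H) (Or.inr ht)
  have h2 := dart_incident (G := H) (Or.inl hsrc)
  intro hsp
  obtain ⟨-, hd1⟩ := hsp
  have := two_le_degree hfe h1 h2
  omega

/-- An edge of `G` at `v` yields an edge of `H` at the image of `v`. -/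
lemma Emb.exists_incident_image (φ : Emb G H) {v : G.V} {e : G.E}
    (h : G.fst e = v ∨ G.snd e = v) :
    ∃ f, H.fst f = φ.vMap v ∨ H.snd f = φ.vMap v := by
  have hw := φ.walk_ok e
  have hne := φ.path_ne e
  rcases h with h | h
  · obtain ⟨d, ds, hcons⟩ := List.exists_cons_of_ne_nil hne
    refine ⟨d.1, dart_incident (Or.inl ?_)⟩
    rw [hcons] at hw
    rw [hw.1, h]
  · refine ⟨((φ.path e).getLast hne).1, dart_incident (Or.inr ?_)⟩
    rw [walk_getLast_tgt hw hne, h]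

/-- First variant: images of vertices of positive degree have positive degree. -/
lemma Emb.degree_image_ne_zero (φ : Emb G H) {v : G.V} (h : G.degree v ≠ 0) :
    H.degree (φ.vMap v) ≠ 0 := by
  obtain ⟨e, he⟩ := exists_incident_of_degree_ne_zero h
  obtain ⟨f, hf⟩ := φ.exists_incident_image he
  exact degree_pos_of_incident hf

/-- Key lemma: an agreement embedding maps non-sprouts to non-sprouts. -/
lemma AgrEmb.nonsprout_image (φ : AgrEmb G H) {v : G.V} (hv : ¬ G.IsSprout v) :
    ¬ H.IsSprout (φ.vMap v) := by
  intro hsp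
  set s := φ.vMap v with hs_def
  obtain ⟨hlab, hdeg⟩ := hsp
  -- find an edge of `H` at `s`
  obtain ⟨f, hf⟩ := exists_incident_of_degree_ne_zero (u := s) (by omega)
  -- it is covered by some path
  obtain ⟨e₀, d, hd, hdf⟩ := φ.covers f
  have hinc : H.dartSrc d = s ∨ H.dartTgt d = s := by
    cases hb : d.2 <;> rcases hf with hf | hf <;>
      simp [dartSrc, dartTgt, hb, hdf, hf]
  rcases walk_vert_cases (φ.walk_ok e₀) hd hinc with h | h | h
  rotate_right
  · exact φ.toEmb.interior_not_sprout h ⟨hlab, hdeg⟩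
  all_goals {
    -- `s` is the image of an endpoint `u` of `e₀`
    first
      | (have hu : φ.vMap (G.fst e₀) = s := h.symm
         have hue : G.fst e₀ = G.fst e₀ ∨ G.snd e₀ = G.fst e₀ := Or.inl rfl
         set u := G.fst e₀ with hu_def)
      | (have hu : φ.vMap (G.snd e₀) = s := h.symm
         have hue : G.fst e₀ = G.snd e₀ ∨ G.snd e₀ = G.snd e₀ := Or.inr rfl
         set u := G.snd e₀ with hu_def)
    by_cases huv : u = v
    · -- `v` is an endpoint of `e₀`
      subst huv
      -- `v` cannot be labelled since `s` is unlabelled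
      have hvlab : G.label u = none := by
        cases hL : G.label u with
        | none => rfl
        | some i => exact absurd (hs_def ▸ φ.label_ok u i hL) (by simp [hlab])
      -- so `v` has degree ≥ 2 since it is not a sprout
      have hdegv : G.degree u ≠ 0 := degree_pos_of_incident hue
      have hdeg2 : 2 ≤ G.degree u := by
        rcases Nat.lt_or_ge (G.degree u) 2 with hlt | hge
        · interval_cases hdu : G.degree u
          · omega
          · exact absurd ⟨hvlab, hdu⟩ hv
        · exact hge
      -- two incidences at `u`, hence two at `s`: contradiction with degree 1
      have h2s := φ.toEmb.two_le_degree_image hdeg2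
      rw [hu] at h2s
      omega
    · -- another vertex shares the image: two-to-one forces `v` labelled
      rcases φ.two_to_one v u (fun hh => huv hh.symm) (hs_def.symm.trans hu.symm) with
        ⟨hvs, _⟩ | ⟨_, hviso⟩
      · exact hv hvs
      · obtain ⟨hvl, _⟩ := hviso
        obtain ⟨i, hi⟩ := Option.isSome_iff_exists.mp hvl
        exact absurd (hs_def ▸ φ.label_ok v i hi) (by simp [hlab]) }

end Aux3

section Aux4

variable {G H N : Multigraph}

/-- The walk in `N` realizing a dart of `H` under an embedding `ψ : Emb H N`. -/
def Emb.seg (ψ : Emb H N) (d : H.Dart) : List N.Dart :=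
  if d.2 then ψ.path d.1 else ((ψ.path d.1).map N.flipDart).reverse

lemma Emb.seg_ne (ψ : Emb H N) (d : H.Dart) : ψ.seg d ≠ [] := by
  unfold Emb.seg
  split
  · exact ψ.path_ne d.1
  · simpa using ψ.path_ne d.1

lemma Emb.seg_walk (ψ : Emb H N) (d : H.Dart) :
    N.IsWalk (ψ.vMap (H.dartSrc d)) (ψ.vMap (H.dartTgt d)) (ψ.seg d) := by
  cases d with | mk f b =>
  cases b
  · simpa [Emb.seg, dartSrc, dartTgt] using isWalk_reverse (ψ.walk_ok f)
  · simpa [Emb.seg, dartSrc, dartTgt] using ψ.walk_ok f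

lemma Emb.mem_seg (ψ : Emb H N) {d : H.Dart} {x : N.Dart} :
    x ∈ ψ.seg d ↔ (if d.2 then x ∈ ψ.path d.1 else N.flipDart x ∈ ψ.path d.1) := by
  unfold Emb.seg
  split
  · rfl
  · rw [List.mem_reverse, List.mem_map]
    constructor
    · rintro ⟨y, hy, rfl⟩
      simpa using hy
    · intro hy
      exact ⟨N.flipDart x, hy, by simp⟩

/-- Every dart of a segment comes from a dart of the underlying path with the
same edge. -/
lemma Emb.mem_seg_edge (ψ : Emb H N) {d : H.Dart} {x : N.Dart} (hx : x ∈ ψ.seg d) :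
    ∃ y ∈ ψ.path d.1, y.1 = x.1 := by
  rw [Emb.mem_seg] at hx
  split at hx
  · exact ⟨x, hx, rfl⟩
  · exact ⟨N.flipDart x, hx, rfl⟩

lemma Emb.seg_edge_mem (ψ : Emb H N) {d : H.Dart} {y : N.Dart} (hy : y ∈ ψ.path d.1) :
    ∃ x ∈ ψ.seg d, x.1 = y.1 := by
  rcases hb : d.2 with _ | _
  · exact ⟨N.flipDart y, by rw [Emb.mem_seg, hb]; simpa using hy, rfl⟩
  · exact ⟨y, by rw [Emb.mem_seg, hb]; simpa using hy, rfl⟩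

/-- The edges of the path of a single edge are pairwise distinct. -/
lemma Emb.path_edges_nodup (ψ : Emb H N) (f : H.E) :
    ((ψ.path f).map (·.1)).Nodup :=
  List.Nodup.map_on (fun x hx y hy hxy => (ψ.edge_inj f f x hx y hy hxy).2) (ψ.nodup f)

lemma Emb.seg_edges_nodup (ψ : Emb H N) (d : H.Dart) :
    ((ψ.seg d).map (·.1)).Nodup := by
  unfold Emb.seg
  split
  · exact ψ.path_edges_nodup d.1
  · rw [List.map_reverse, List.nodup_reverse, List.map_map]
    have : ((fun x : N.Dart => x.1) ∘ N.flipDart) = (fun x : N.Dart => x.1) := by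
      funext x; cases x; rfl
    rw [this]
    exact ψ.path_edges_nodup d.1

lemma Emb.interior_seg (ψ : Emb H N) {f : H.E} {b : Bool} :
    ∀ w, w ∈ N.interiorVerts (ψ.seg (f, b)) ↔ w ∈ N.interiorVerts (ψ.path f) := by
  intro w
  cases b
  · unfold Emb.seg
    rw [if_neg (by simp), interiorVerts_reverse_flip (ψ.walk_ok f), List.mem_reverse]
  · unfold Emb.seg
    simp

lemma Emb.interior_seg' (ψ : Emb H N) {d : H.Dart} {w : N.V} :
    w ∈ N.interiorVerts (ψ.seg d) ↔ w ∈ N.interiorVerts (ψ.path d.1) := by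
  cases d with | mk f b => exact ψ.interior_seg w

/-- The concatenated walk. -/
lemma Emb.flatMap_walk (ψ : Emb H N) {a b : H.V} {l : List H.Dart}
    (h : H.IsWalk a b l) :
    N.IsWalk (ψ.vMap a) (ψ.vMap b) (l.flatMap ψ.seg) := by
  induction l generalizing a with
  | nil => simpa [IsWalk] using congrArg ψ.vMap h
  | cons d ds ih =>
    obtain ⟨h1, h2⟩ := h
    rw [List.flatMap_cons]
    exact isWalk_append (h1 ▸ ψ.seg_walk d) (ih h2)

/-- Generic nodup lemma for `flatMap`. -/
lemma nodup_flatMap_of {α β : Type*} {l : List α} {g : α → List β}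
    (h1 : ∀ a ∈ l, (g a).Nodup) (h2 : l.Nodup)
    (h3 : ∀ a ∈ l, ∀ a' ∈ l, ∀ x ∈ g a, x ∈ g a' → a = a') :
    (l.flatMap g).Nodup := by
  induction l with
  | nil => simp
  | cons d ds ih =>
    rw [List.flatMap_cons, List.nodup_append]
    refine ⟨h1 d (by simp), ih (fun a ha => h1 a (by simp [ha]))
      (List.nodup_cons.mp h2).2
      (fun a ha a' ha' x hx hx' => h3 a (by simp [ha]) a' (by simp [ha']) x hx hx'), ?_⟩
    intro x hx x' hx' hxx'
    subst hxx'
    obtain ⟨d', hd', hxd'⟩ := List.mem_flatMap.mp hx'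
    have : d = d' := h3 d (by simp) d' (by simp [hd']) x hx hxd'
    exact (List.nodup_cons.mp h2).1 (this ▸ hd')

end Aux4

section Aux5

variable {G H N : Multigraph}

@[simp] lemma flipDart_fst (d : G.Dart) : (G.flipDart d).1 = d.1 := rfl

lemma Emb.flatMap_seg_ne (ψ : Emb H N) {l : List H.Dart} (h : l ≠ []) :
    l.flatMap ψ.seg ≠ [] := by
  cases l with
  | nil => exact absurd rfl h
  | cons d ds =>
    rw [List.flatMap_cons]
    intro hq
    exact ψ.seg_ne d (List.append_eq_nil_iff.mp hq).1

lemma Emb.seg_interior_nodup (ψ : Emb H N) (d : H.Dart) :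
    (N.interiorVerts (ψ.seg d)).Nodup := by
  unfold Emb.seg
  split
  · exact ψ.interior_nodup d.1
  · rw [interiorVerts_reverse_flip (ψ.walk_ok d.1), List.nodup_reverse]
    exact ψ.interior_nodup d.1

lemma Emb.mem_seg_cases (ψ : Emb H N) {d : H.Dart} {x : N.Dart} (hx : x ∈ ψ.seg d) :
    ∃ y ∈ ψ.path d.1, y.1 = x.1 ∧
      ((d.2 = true ∧ y = x) ∨ (d.2 = false ∧ y = N.flipDart x)) := by
  rw [Emb.mem_seg] at hx
  rcases hb : d.2 with _ | _ <;> rw [hb] at hx <;> simp at hx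
  · exact ⟨N.flipDart x, hx, by simp, Or.inr ⟨rfl, rfl⟩⟩
  · exact ⟨x, hx, rfl, Or.inl ⟨rfl, rfl⟩⟩

/-- Edge-injectivity of the composed paths. -/
lemma comp_edge_inj (φ : Emb G H) (ψ : Emb H N) (e e' : G.E)
    {x x' : N.Dart} (hx : x ∈ (φ.path e).flatMap ψ.seg)
    (hx' : x' ∈ (φ.path e').flatMap ψ.seg) (hE : x.1 = x'.1) :
    e = e' ∧ x = x' := by
  obtain ⟨d, hd, hxd⟩ := List.mem_flatMap.mp hx
  obtain ⟨d', hd', hxd'⟩ := List.mem_flatMap.mp hx'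
  obtain ⟨y, hy, hy1, hycase⟩ := ψ.mem_seg_cases hxd
  obtain ⟨y', hy', hy1', hycase'⟩ := ψ.mem_seg_cases hxd'
  obtain ⟨hff, hyy⟩ := ψ.edge_inj d.1 d'.1 y hy y' hy' (by rw [hy1, hy1', hE])
  obtain ⟨hee, hdd⟩ := φ.edge_inj e e' d hd d' hd' hff
  subst hee; subst hdd; subst hyy
  refine ⟨rfl, ?_⟩
  rcases hycase with ⟨hb, rfl⟩ | ⟨hb, hflip⟩ <;>
    rcases hycase' with ⟨hb', h2⟩ | ⟨hb', h2⟩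
  · exact h2
  · rw [hb] at hb'; exact absurd hb' (by simp)
  · rw [hb] at hb'; exact absurd hb' (by simp)
  · rw [hflip] at h2
    have := congrArg N.flipDart h2
    simpa using this

/-- Membership in the interior of a composed path. -/
lemma Emb.interior_flatMap_mem (ψ : Emb H N) {l : List H.Dart} {w : N.V}
    (hw : w ∈ N.interiorVerts (l.flatMap ψ.seg)) :
    (∃ d ∈ l, w ∈ N.interiorVerts (ψ.seg d)) ∨
      ∃ u ∈ H.interiorVerts l, w = ψ.vMap u := by
  induction l with
  | nil => simp [interiorVerts] at hw
  | cons d ds ih =>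
    rw [List.flatMap_cons] at hw
    by_cases hds : ds = []
    · subst hds
      simp only [List.flatMap_nil, List.append_nil] at hw
      exact Or.inl ⟨d, by simp, hw⟩
    · rw [interiorVerts_append (ψ.flatMap_seg_ne hds)] at hw
      rcases List.mem_append.mp hw with hw1 | hw2
      · rw [map_tgt_eq_interior_concat (ψ.seg_walk d) (ψ.seg_ne d)] at hw1
        rcases List.mem_append.mp hw1 with hw3 | hw4
        · exact Or.inl ⟨d, by simp, hw3⟩
        · refine Or.inr ⟨H.dartTgt d, ?_, (List.mem_singleton.mp hw4)⟩
          rw [interiorVerts_cons hds]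
          simp
      · rcases ih hw2 with ⟨d', hd', hwd'⟩ | ⟨u, hu, hwu⟩
        · exact Or.inl ⟨d', by simp [hd'], hwd'⟩
        · refine Or.inr ⟨u, ?_, hwu⟩
          rw [interiorVerts_cons hds]
          exact List.mem_cons_of_mem _ hu

/-- Interior vertices of a composed path are pairwise distinct. -/
lemma AgrEmb.interior_flatMap_nodup (ψ : AgrEmb H N) {l : List H.Dart}
    (hnd : l.Nodup) (hinj : ∀ d ∈ l, ∀ d' ∈ l, d.1 = d'.1 → d = d')
    (hmapnd : ((H.interiorVerts l).map ψ.vMap).Nodup)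
    (hns : ∀ u ∈ H.interiorVerts l, ¬ H.IsSprout u) :
    (N.interiorVerts (l.flatMap ψ.toEmb.seg)).Nodup := by
  induction l with
  | nil => simp [interiorVerts]
  | cons d ds ih =>
    rw [List.flatMap_cons]
    by_cases hds : ds = []
    · subst hds
      simp only [List.flatMap_nil, List.append_nil]
      exact ψ.toEmb.seg_interior_nodup d
    · rw [interiorVerts_append (ψ.toEmb.flatMap_seg_ne hds),
        map_tgt_eq_interior_concat (ψ.toEmb.seg_walk d) (ψ.toEmb.seg_ne d)]
      -- facts about the head dart's target
      have hdint : H.dartTgt d ∈ H.interiorVerts (d :: ds) := by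
        rw [interiorVerts_cons hds]; simp
      have htail : ∀ u ∈ H.interiorVerts ds, u ∈ H.interiorVerts (d :: ds) := by
        intro u hu
        rw [interiorVerts_cons hds]
        exact List.mem_cons_of_mem _ hu
      have hfresh : ∀ u ∈ H.interiorVerts (d :: ds), ∀ d' ∈ (d :: ds),
          ψ.vMap u ∉ N.interiorVerts (ψ.toEmb.seg d') := by
        intro u hu d' _ hmem
        exact ψ.interior_fresh d'.1 _ (ψ.toEmb.interior_seg'.mp hmem) u (hns u hu) rfl
      rw [List.append_assoc, List.nodup_append]
      refine ⟨ψ.toEmb.seg_interior_nodup d, ?_, ?_⟩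
      · -- `t d :: interior of the rest` is nodup
        rw [List.singleton_append, List.nodup_cons]
        constructor
        · -- `t d` does not reappear later
          intro hmem
          rcases ψ.toEmb.interior_flatMap_mem hmem with ⟨d', hd', hwd'⟩ | ⟨u, hu, hwu⟩
          · exact hfresh _ hdint d' (List.mem_cons_of_mem _ hd') hwd'
          · -- two interior vertices of `l` with the same image
            rw [interiorVerts_cons hds, List.map_cons, List.nodup_cons] at hmapnd
            exact hmapnd.1 (hwu ▸ List.mem_map_of_mem hu)
        · exact ih (List.nodup_cons.mp hnd).2
            (fun a ha a' ha' hq => hinj a (List.mem_cons_of_mem _ ha)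
              a' (List.mem_cons_of_mem _ ha') hq)
            (by rw [interiorVerts_cons hds, List.map_cons, List.nodup_cons] at hmapnd
                exact hmapnd.2)
            (fun u hu => hns u (htail u hu))
      · -- the interior of the head segment is disjoint from the rest
        intro w hw w' hw' hww
        subst hww
        rcases List.mem_append.mp hw' with hw1 | hw2
        · exact hfresh _ hdint d (by simp) ((List.mem_singleton.mp hw1) ▸ hw)
        · rcases ψ.toEmb.interior_flatMap_mem hw2 with ⟨d', hd', hwd'⟩ | ⟨u, hu, hwu⟩
          · -- interiors of segments of distinct darts are disjoint
            have hdne : d ≠ d' := fun hq => (List.nodup_cons.mp hnd).1 (hq ▸ hd')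
            have hfne : d.1 ≠ d'.1 := fun hq =>
              hdne (hinj d (by simp) d' (List.mem_cons_of_mem _ hd') hq)
            exact ψ.interior_disj d.1 d'.1 hfne w (ψ.toEmb.interior_seg'.mp hw)
              (ψ.toEmb.interior_seg'.mp hwd')
          · exact hfresh u (htail u hu) d (by simp) (hwu ▸ hw)

end Aux5

section Aux6

variable {G H N : Multigraph}

lemma AgrEmb.sprout_preimage (φ : AgrEmb G H) {v : G.V}
    (h : H.IsSprout (φ.vMap v)) : G.IsSprout v := by
  by_contra hq
  exact φ.nonsprout_image hq h

lemma AgrEmb.labiso_preimage (φ : AgrEmb G H) {v : G.V}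
    (h : H.IsLabelledIsolated (φ.vMap v)) : G.IsLabelledIsolated v := by
  obtain ⟨hl, hd⟩ := h
  have hdeg : G.degree v = 0 := by
    by_contra hq
    exact (φ.toEmb.degree_image_ne_zero hq) hd
  refine ⟨?_, hdeg⟩
  cases hLv : G.label v with
  | some i => simp
  | none =>
    obtain ⟨i, hi⟩ := Option.isSome_iff_exists.mp hl
    obtain ⟨w, ⟨hwl, hwm⟩, -⟩ := φ.labels_unique (φ.vMap v) i hi
    have hwv : w ≠ v := fun hq => by rw [hq, hLv] at hwl; simp at hwl
    rcases φ.two_to_one w v hwv hwm with ⟨-, hviso⟩ | ⟨hvsp, -⟩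
    · exact absurd hviso.1 (by rw [hLv]; simp)
    · exact absurd hvsp.2 (by rw [hdeg]; simp)

/-- Two distinct vertices of `G` with a common image in `H` cannot share their
image in `N` with yet another vertex. -/
lemma AgrEmb.no_shared_triple (φ : AgrEmb G H) (ψ : AgrEmb H N) {u v : G.V} {c : H.V}
    (huv : u ≠ v) (hab : φ.vMap u = φ.vMap v) (hac : φ.vMap u ≠ c)
    (hpsi : ψ.vMap (φ.vMap u) = ψ.vMap c) : False := by
  -- among `u, v` there is a sprout and a labelled isolated vertex
  have key : ∃ s t : G.V, G.IsSprout s ∧ G.IsLabelledIsolated t ∧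
      φ.vMap s = φ.vMap u ∧ φ.vMap t = φ.vMap u := by
    rcases φ.two_to_one u v huv hab with ⟨h1, h2⟩ | ⟨h1, h2⟩
    · exact ⟨u, v, h1, h2, rfl, hab.symm⟩
    · exact ⟨v, u, h1, h2, hab.symm, rfl⟩
  obtain ⟨s, t, hs, ht, hsm, htm⟩ := key
  -- the common image is labelled, hence not a sprout of `H`
  obtain ⟨i, hi⟩ := Option.isSome_iff_exists.mp ht.1
  have hlab : H.label (φ.vMap u) = some i := htm ▸ φ.label_ok t i hi
  rcases ψ.two_to_one _ _ hac hpsi with ⟨hsp, -⟩ | ⟨-, hiso⟩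
  · exact absurd hsp.1 (by rw [hlab]; simp)
  · -- the common image is labelled isolated in `H`, but the sprout `s` forces
    -- an incident edge
    have : H.degree (φ.vMap s) ≠ 0 := φ.toEmb.degree_image_ne_zero (by rw [hs.2]; simp)
    rw [hsm] at this
    exact this hiso.2

end Aux6
end Multigraph

open Multigraph in
/-- Having an agreement embedding is a transitive property. -/
theorem agreement_embedding_transitive (G H N : Multigraph)
    (h₁ : Nonempty (AgrEmb G H)) (h₂ : Nonempty (AgrEmb H N)) :
    Nonempty (AgrEmb G N) := by
  obtain ⟨φ⟩ := h₁
  obtain ⟨ψ⟩ := h₂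
  refine ⟨{
    vMap := fun v => ψ.vMap (φ.vMap v)
    path := fun e => (φ.path e).flatMap ψ.toEmb.seg
    walk_ok := fun e => ψ.toEmb.flatMap_walk (φ.walk_ok e)
    path_ne := fun e => ψ.toEmb.flatMap_seg_ne (φ.path_ne e)
    nodup := ?_
    edge_inj := fun e e' x hx x' hx' hq => comp_edge_inj φ.toEmb ψ.toEmb e e' hx hx' hq
    interior_nodup := ?_
    interior_disj := ?_
    label_ok := fun v i hv => ψ.label_ok _ i (φ.label_ok v i hv)
    covers := ?_
    two_to_one := ?_
    at_most_two := ?_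
    labels_unique := ?_
    interior_fresh := ?_ }⟩
  · -- nodup
    intro e
    refine List.Nodup.of_map (fun x : N.Dart => x.1) ?_
    rw [List.map_flatMap]
    refine nodup_flatMap_of (fun d _ => ψ.toEmb.seg_edges_nodup d) (φ.nodup e) ?_
    intro d hd d' hd' x hx hx'
    obtain ⟨z, hz, rfl⟩ := List.mem_map.mp hx
    obtain ⟨z', hz', hzz⟩ := List.mem_map.mp hx'
    obtain ⟨y, hy, hy1⟩ := ψ.toEmb.mem_seg_edge hz
    obtain ⟨y', hy', hy1'⟩ := ψ.toEmb.mem_seg_edge hz'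
    have hff : d.1 = d'.1 :=
      (ψ.edge_inj d.1 d'.1 y hy y' hy' (by rw [hy1, hy1', hzz])).1
    exact (φ.edge_inj e e d hd d' hd' hff).2
  · -- interior_nodup
    intro e
    refine ψ.interior_flatMap_nodup (φ.nodup e)
      (fun d hd d' hd' hq => (φ.edge_inj e e d hd d' hd' hq).2) ?_
      (fun u hu => φ.toEmb.interior_not_sprout hu)
    refine List.Nodup.map_on ?_ (φ.interior_nodup e)
    intro u hu u' hu' hq
    by_contra hne
    rcases ψ.two_to_one u u' hne hq with ⟨hsp, -⟩ | ⟨hsp, -⟩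
    · exact φ.toEmb.interior_not_sprout hu hsp
    · exact φ.toEmb.interior_not_sprout hu' hsp
  · -- interior_disj
    intro e e' hee w hw hw'
    rcases ψ.toEmb.interior_flatMap_mem hw with ⟨d, hd, h1⟩ | ⟨u, hu, hwu⟩ <;>
      rcases ψ.toEmb.interior_flatMap_mem hw' with ⟨d', hd', h2⟩ | ⟨u', hu', hwu'⟩
    · have hff : d.1 ≠ d'.1 := fun hq => hee (φ.edge_inj e e' d hd d' hd' hq).1
      exact ψ.interior_disj d.1 d'.1 hff w (ψ.toEmb.interior_seg'.mp h1)
        (ψ.toEmb.interior_seg'.mp h2)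
    · exact ψ.interior_fresh d.1 w (ψ.toEmb.interior_seg'.mp h1) u'
        (φ.toEmb.interior_not_sprout hu') hwu'.symm
    · exact ψ.interior_fresh d'.1 w (ψ.toEmb.interior_seg'.mp h2) u
        (φ.toEmb.interior_not_sprout hu) hwu.symm
    · have hne : u ≠ u' := fun hq => φ.interior_disj e e' hee u hu (hq ▸ hu')
      rcases ψ.two_to_one u u' hne (by rw [← hwu, ← hwu']) with ⟨hsp, -⟩ | ⟨hsp, -⟩
      · exact φ.toEmb.interior_not_sprout hu hsp
      · exact φ.toEmb.interior_not_sprout hu' hsp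
  · -- covers
    intro f
    obtain ⟨f', y, hy, hyf⟩ := ψ.covers f
    obtain ⟨e, d, hd, hdf'⟩ := φ.covers f'
    obtain ⟨x, hxseg, hx1⟩ := ψ.toEmb.seg_edge_mem (d := d) (by rw [hdf']; exact hy)
    exact ⟨e, x, List.mem_flatMap.mpr ⟨d, hd, hxseg⟩, by rw [hx1, hyf]⟩
  · -- two_to_one
    intro u v hne himg
    by_cases hphi : φ.vMap u = φ.vMap v
    · exact φ.two_to_one u v hne hphi
    · rcases ψ.two_to_one _ _ hphi himg with ⟨hsp, hiso⟩ | ⟨hsp, hiso⟩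
      · exact Or.inl ⟨φ.sprout_preimage hsp, φ.labiso_preimage hiso⟩
      · exact Or.inr ⟨φ.sprout_preimage hsp, φ.labiso_preimage hiso⟩
  · -- at_most_two
    intro u v w huv hvw huw hcon
    obtain ⟨h1, h2⟩ := hcon
    by_cases hab : φ.vMap u = φ.vMap v
    · by_cases hbc : φ.vMap v = φ.vMap w
      · exact φ.at_most_two u v w huv hvw huw ⟨hab, hbc⟩
      · exact φ.no_shared_triple ψ huv hab (fun hq => hbc (hab ▸ hq))
          (h1.trans h2)
    · by_cases hbc : φ.vMap v = φ.vMap w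
      · exact φ.no_shared_triple ψ hvw hbc (fun hq => hab hq.symm) h1.symm
      · by_cases hac : φ.vMap u = φ.vMap w
        · exact φ.no_shared_triple ψ huw hac hab h1
        · exact ψ.at_most_two _ _ _ hab hbc hac ⟨h1, h2⟩
  · -- labels_unique
    intro x i hx
    obtain ⟨b, ⟨hbl, hbm⟩, hbu⟩ := ψ.labels_unique x i hx
    obtain ⟨v, ⟨hvl, hvm⟩, hvu⟩ := φ.labels_unique b i hbl
    refine ⟨v, ⟨hvl, show ψ.vMap (φ.vMap v) = x by rw [hvm, hbm]⟩, ?_⟩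
    rintro v' ⟨hv'l, hv'm⟩
    have hb' : φ.vMap v' = b := hbu (φ.vMap v') ⟨φ.label_ok v' i hv'l, hv'm⟩
    exact hvu v' ⟨hv'l, hb'⟩
  · -- interior_fresh
    intro e w hw v hnsv
    rcases ψ.toEmb.interior_flatMap_mem hw with ⟨d, hd, h1⟩ | ⟨u, hu, hwu⟩
    · exact ψ.interior_fresh d.1 w (ψ.toEmb.interior_seg'.mp h1) (φ.vMap v)
        (φ.nonsprout_image hnsv)
    · intro hq
      have hvu : φ.vMap v ≠ u := φ.interior_fresh e u hu v hnsv
      rcases ψ.two_to_one _ _ hvu (show ψ.vMap (φ.vMap v) = ψ.vMap u by rw [← hwu]; exact hq) with ⟨hsp, -⟩ | ⟨hsp, -⟩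
      · exact φ.nonsprout_image hnsv hsp
      · exact φ.toEmb.interior_not_sprout hu hsp
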